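/- arXiv:2207.08645 — 7 statements merged into one kernel-verified Lean document; each statement's English description precedes it below -/
import Mathlib

section
/- A reward function r is feasible for the IRL problem (M, π^E) (i.e., π^E is an optimal policy in M ∪ r) if and only if there exist nonnegative functions A_h : S × A → ℝ_{≥0} and functions V_h : S → ℝ (for h ∈ [H], with V_{H} interpreted appropriately at the terminal step) such that for all s, a, h: r_h(s,a) = −A_h(s,a)·1[π^E_h(a|s) = 0] + V_h(s) − Σ_{s'} P(s'|s,a) V_{h+1}(s'). -/
open Finset

/-- Feasible reward set, explicit form; cf. Lemma 4.3 of the paper.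
A reward `r` is feasible for the IRL problem `(M, πE)` (i.e. `πE` is optimal in `M ∪ r`)
iff there exist nonnegative `A_h` and `V_h` (with `V_H = 0` at the terminal step) such
that `r_h(s,a) = −A_h(s,a)·1[πE_h(a|s)=0] + V_h(s) − ∑_{s'} P(s'|s,a) V_{h+1}(s')`. -/
theorem stmt4 {S A : Type*} [Fintype S] [Fintype A] [DecidableEq S] [DecidableEq A]
    (H : ℕ) (P : S → A → S → ℝ)
    (hPnn : ∀ s a s', 0 ≤ P s a s')
    (hPsum : ∀ s a, ∑ s' : S, P s a s' = 1)
    (r : ℕ → S → A → ℝ)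
    (πE : ℕ → S → A → ℝ)
    (hπnn : ∀ h s a, 0 ≤ πE h s a) (hπsum : ∀ h s, ∑ a : A, πE h s a = 1) :
    -- `πE` is optimal in `M ∪ r`:
    ((∃ (Q : ℕ → S → A → ℝ) (V : ℕ → S → ℝ),
        (∀ s a, Q H s a = 0) ∧
        (∀ h s, V h s = ∑ a : A, πE h s a * Q h s a) ∧
        (∀ h, h < H → ∀ s a, Q h s a = r h s a + ∑ s' : S, P s a s' * V (h+1) s') ∧
        (∀ h, h < H → ∀ s a,
          (0 < πE h s a → Q h s a = V h s) ∧
          (πE h s a = 0 → Q h s a ≤ V h s)))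
      ↔
      (∃ (Af : ℕ → S → A → ℝ) (Vf : ℕ → S → ℝ),
        (∀ h s a, 0 ≤ Af h s a) ∧
        (∀ s, Vf H s = 0) ∧
        (∀ h, h < H → ∀ s a,
          r h s a = -(Af h s a) * (if πE h s a = 0 then 1 else 0) + Vf h s
            - ∑ s' : S, P s a s' * Vf (h+1) s'))) := by
  constructor
  · rintro ⟨Q, V, hQH, hV, hBell, hOpt⟩
    have hVH : ∀ s, V H s = 0 := by
      intro s
      rw [hV]
      simp [hQH]
    refine ⟨fun h s a => if h' : h < H then (if πE h s a = 0 then V h s - Q h s a else 0) else 0,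
      fun h s => if h = H then 0 else V h s, ?_, by simp, ?_⟩
    · intro h s a
      by_cases h' : h < H
      · simp only [dif_pos h']
        by_cases hp : πE h s a = 0
        · simp only [if_pos hp]
          linarith [(hOpt h h' s a).2 hp]
        · simp [hp]
      · simp [h']
    · intro h hh s a
      have h1 : (if h = H then (0:ℝ) else V h s) = V h s := by
        simp [Nat.ne_of_lt hh]
      have h2 : ∀ s', (if h + 1 = H then (0:ℝ) else V (h+1) s') = V (h+1) s' := by
        intro s'
        by_cases he : h + 1 = H
        · simp [he, hVH]
        · simp [he]
      simp only [dif_pos hh, h1]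
      rw [Finset.sum_congr rfl (fun s' _ => by rw [h2 s'])]
      have := hBell h hh s a
      by_cases hp : πE h s a = 0
      · simp only [if_pos hp]
        linarith
      · have := (hOpt h hh s a).1 (lt_of_le_of_ne (hπnn h s a) (Ne.symm hp))
        simp only [if_neg hp]
        linarith
  · rintro ⟨Af, Vf, hAnn, hVfH, hr⟩
    set Qd : ℕ → S → A → ℝ :=
      fun h s a => if h' : h < H then r h s a + ∑ s' : S, P s a s' * Vf (h+1) s' else 0 with hQd
    set Vd : ℕ → S → ℝ := fun h s => ∑ a : A, πE h s a * Qd h s a with hVd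
    have hQ : ∀ h, h < H → ∀ s a, Qd h s a
        = Vf h s - Af h s a * (if πE h s a = 0 then 1 else 0) := by
      intro h hh s a
      rw [hQd]
      simp only [dif_pos hh, hr h hh s a]
      ring
    have hVeq : ∀ h, h ≤ H → ∀ s, Vd h s = Vf h s := by
      intro h hh s
      rcases lt_or_eq_of_le hh with hh | hh
      · rw [hVd]
        simp only
        rw [Finset.sum_congr rfl (fun b _ => by rw [hQ h hh s b])]
        have : ∀ b ∈ Finset.univ, πE h s b * (Vf h s - Af h s b * (if πE h s b = 0 then 1 else 0))
            = πE h s b * Vf h s := by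
          intro b _
          by_cases hp : πE h s b = 0
          · simp [hp]
          · simp [hp]
        rw [Finset.sum_congr rfl this, ← Finset.sum_mul, hπsum, one_mul]
      · subst hh
        rw [hVd]
        simp [hQd, hVfH]
    refine ⟨Qd, Vd, by simp [hQd], fun h s => rfl, ?_, ?_⟩
    · intro h hh s a
      rw [hQd]
      simp only [dif_pos hh]
      have hv : ∀ s', Vd (h+1) s' = Vf (h+1) s' := fun s' => hVeq (h+1) (by omega) s'
      simp only [hv]
    · intro h hh s a
      rw [hVeq h (le_of_lt hh) s, hQ h hh s a]
      constructor
      · intro hp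
        rw [if_neg (ne_of_gt hp)]
        ring
      · intro hp
        rw [if_pos hp]
        nlinarith [hAnn h s a]
end

section
/- Let M₁, M₂ be two finite-horizon MDPs without reward with transition models P₁, P₂, r a reward function, and π₁*, π₂* optimal policies in M₁∪r and M₂∪r respectively. Then for all s and h: V*_{M₁∪r,h}(s) − V*_{M₂∪r,h}(s) ≤ Σ_{h'=h}^{H} Σ_{s',a',s''} ρ^{π₁*}_{M₂,h,h'}(s'|s) · π₁*_{h'}(a'|s') · (P₁(s''|s',a') − P₂(s''|s',a')) · V*_{M₁∪r,h'+1}(s''), where V* denotes the optimal value function. -/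
open Finset


noncomputable def Wfun {S A : Type*} [Fintype S] [Fintype A] (H : ℕ) (P2 : S → A → S → ℝ)
    (r : ℕ → S → A → ℝ) (π1 : ℕ → S → A → ℝ) : ℕ → S → ℝ
  | h => fun s =>
      if _hh : h < H then
        ∑ a : A, π1 h s a * (r h s a + ∑ s' : S, P2 s a s' * Wfun H P2 r π1 (h+1) s')
      else 0
  termination_by h => H - h
  decreasing_by omega

theorem Wfun_of_le {S A : Type*} [Fintype S] [Fintype A] (H : ℕ) (P2 : S → A → S → ℝ)
    (r : ℕ → S → A → ℝ) (π1 : ℕ → S → A → ℝ) (h : ℕ) (hh : H ≤ h) (s : S) :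
    Wfun H P2 r π1 h s = 0 := by
  rw [Wfun]; simp [Nat.not_lt.mpr hh]

theorem Wfun_of_lt {S A : Type*} [Fintype S] [Fintype A] (H : ℕ) (P2 : S → A → S → ℝ)
    (r : ℕ → S → A → ℝ) (π1 : ℕ → S → A → ℝ) (h : ℕ) (hh : h < H) (s : S) :
    Wfun H P2 r π1 h s
      = ∑ a : A, π1 h s a * (r h s a + ∑ s' : S, P2 s a s' * Wfun H P2 r π1 (h+1) s') := by
  rw [Wfun]; simp [hh]

/-- cf. Lemma B.5, first inequality. For two MDPs with transitions
`P₁`, `P₂`, reward `r`, and optimal policies `π₁*`, `π₂*` of `M₁∪r`, `M₂∪r`: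
`V*_{M₁∪r,h}(s) − V*_{M₂∪r,h}(s) ≤ ∑_{h'=h}^H ∑_{s',a',s''} ρ^{π₁*}_{M₂,h,h'}(s'|s)
  π₁*_{h'}(a'|s') (P₁(s''|s',a') − P₂(s''|s',a')) V*_{M₁∪r,h'+1}(s'')`. -/
theorem stmt7 {S A : Type*} [Fintype S] [Fintype A] [DecidableEq S] [DecidableEq A]
    (H : ℕ) (P1 P2 : S → A → S → ℝ)
    (hP1nn : ∀ s a s', 0 ≤ P1 s a s') (hP1sum : ∀ s a, ∑ s' : S, P1 s a s' = 1)
    (hP2nn : ∀ s a s', 0 ≤ P2 s a s') (hP2sum : ∀ s a, ∑ s' : S, P2 s a s' = 1)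
    (r : ℕ → S → A → ℝ)
    (π1 π2 : ℕ → S → A → ℝ)
    (hπ1nn : ∀ h s a, 0 ≤ π1 h s a) (hπ1sum : ∀ h s, ∑ a : A, π1 h s a = 1)
    (hπ2nn : ∀ h s a, 0 ≤ π2 h s a) (hπ2sum : ∀ h s, ∑ a : A, π2 h s a = 1)
    (V1 V2 : ℕ → S → ℝ)
    -- `V1 = V^{π₁*}_{M₁∪r}` is the optimal value function of `M₁ ∪ r`
    (hV10 : ∀ h, H ≤ h → ∀ s, V1 h s = 0)
    (hV1 : ∀ h, h < H → ∀ s, V1 h s =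
      ∑ a : A, π1 h s a * (r h s a + ∑ s' : S, P1 s a s' * V1 (h+1) s'))
    (hopt1 : ∀ (π' : ℕ → S → A → ℝ) (V' : ℕ → S → ℝ),
      (∀ h s a, 0 ≤ π' h s a) → (∀ h s, ∑ a : A, π' h s a = 1) →
      (∀ h, H ≤ h → ∀ s, V' h s = (0:ℝ)) →
      (∀ h, h < H → ∀ s : S, V' h s =
        ∑ a : A, π' h s a * (r h s a + ∑ s' : S, P1 s a s' * V' (h+1) s')) →
      ∀ h (s : S), V' h s ≤ V1 h s)
    -- `V2 = V^{π₂*}_{M₂∪r}` is the optimal value function of `M₂ ∪ r`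
    (hV20 : ∀ h, H ≤ h → ∀ s, V2 h s = 0)
    (hV2 : ∀ h, h < H → ∀ s, V2 h s =
      ∑ a : A, π2 h s a * (r h s a + ∑ s' : S, P2 s a s' * V2 (h+1) s'))
    (hopt2 : ∀ (π' : ℕ → S → A → ℝ) (V' : ℕ → S → ℝ),
      (∀ h s a, 0 ≤ π' h s a) → (∀ h s, ∑ a : A, π' h s a = 1) →
      (∀ h, H ≤ h → ∀ s, V' h s = (0:ℝ)) →
      (∀ h, h < H → ∀ s : S, V' h s =
        ∑ a : A, π' h s a * (r h s a + ∑ s' : S, P2 s a s' * V' (h+1) s')) →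
      ∀ h (s : S), V' h s ≤ V2 h s)
    -- state-visitation probabilities of `π₁*` in `M₂`
    (ρ : ℕ → ℕ → S → S → ℝ)
    (hρ0 : ∀ h s s', ρ h h s s' = if s' = s then 1 else 0)
    (hρ : ∀ h h' s s', ρ h (h'+1) s s' =
      ∑ s'' : S, ∑ a : A, P2 s'' a s' * π1 h' s'' a * ρ h h' s s'') :
    ∀ h, h ≤ H → ∀ s : S,
      V1 h s - V2 h s ≤
        ∑ h' ∈ Finset.Icc h H, ∑ s' : S, ∑ a' : A, ∑ s'' : S,
          ρ h h' s s' * π1 h' s' a' * (P1 s' a' s'' - P2 s' a' s'') * V1 (h'+1) s'' := by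
  -- `W = V^{π₁*}_{M₂∪r}`: the value of policy `π₁*` in the MDP `M₂ ∪ r`
  set W : ℕ → S → ℝ := Wfun H P2 r π1 with hW
  have hW0 : ∀ h, H ≤ h → ∀ s, W h s = 0 := fun h hh s => Wfun_of_le H P2 r π1 h hh s
  have hWrec : ∀ h, h < H → ∀ s : S, W h s =
      ∑ a : A, π1 h s a * (r h s a + ∑ s' : S, P2 s a s' * W (h+1) s') :=
    fun h hh s => Wfun_of_lt H P2 r π1 h hh s
  have hWle : ∀ h (s : S), W h s ≤ V2 h s :=
    hopt2 π1 W hπ1nn hπ1sum hW0 hWrec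
  -- Chapman–Kolmogorov for ρ
  have CK : ∀ d h (s t : S), ρ h (h+1+d) s t =
      ∑ u : S, (∑ a : A, π1 h s a * P2 s a u) * ρ (h+1) (h+1+d) u t := by
    intro d
    induction d with
    | zero =>
      intro h s t
      simp only [Nat.add_zero]
      rw [hρ]
      simp [hρ0, mul_ite, ite_mul, Finset.sum_ite_eq, Finset.sum_ite_eq']
      exact Finset.sum_congr rfl fun a _ => by ring
    | succ d ih =>
      intro h s t
      have e : h+1+(d+1) = (h+1+d)+1 := by omega
      rw [e]
      simp only [hρ, ih]
      simp only [Finset.mul_sum, Finset.sum_mul]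
      conv_rhs => rw [Finset.sum_comm]
      refine Finset.sum_congr rfl fun s'' _ => ?_
      rw [Finset.sum_comm]
      refine Finset.sum_congr rfl fun u _ => Finset.sum_congr rfl fun a _ =>
        Finset.sum_congr rfl fun a' _ => by ring
  have CK' : ∀ h h', h + 1 ≤ h' → ∀ (s t : S), ρ h h' s t =
      ∑ u : S, (∑ a : A, π1 h s a * P2 s a u) * ρ (h+1) h' u t := by
    intro h h' hh s t
    have e : h' = h + 1 + (h' - (h+1)) := by omega
    rw [e]
    exact CK _ h s t
  -- the key equality: `V1 - W` equals the RHS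
  have E : ∀ d h, H - h = d → h ≤ H → ∀ s : S,
      V1 h s - W h s =
        ∑ h' ∈ Finset.Icc h H, ∑ s' : S, ∑ a' : A, ∑ s'' : S,
          ρ h h' s s' * π1 h' s' a' * (P1 s' a' s'' - P2 s' a' s'') * V1 (h'+1) s'' := by
    intro d
    induction d with
    | zero =>
      intro h hd hh s
      have hH : h = H := by omega
      subst hH
      rw [hV10 h le_rfl s, hW0 h le_rfl s]
      have hz : ∀ s'' : S, V1 (h+1) s'' = 0 := hV10 (h+1) (Nat.le_succ h)
      simp [Finset.Icc_self, hz]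
    | succ d ih =>
      intro h hd hh s
      have hlt : h < H := by omega
      -- split off the `h' = h` term on the RHS
      have hins : Finset.Icc h H = insert h (Finset.Icc (h+1) H) := by
        ext x; simp only [Finset.mem_Icc, Finset.mem_insert]; omega
      have hnotmem : h ∉ Finset.Icc (h+1) H := by simp [Finset.mem_Icc]
      rw [hins, Finset.sum_insert hnotmem]
      -- the `h' = h` term collapses by `hρ0`
      have hA : (∑ s' : S, ∑ a' : A, ∑ s'' : S,
            ρ h h s s' * π1 h s' a' * (P1 s' a' s'' - P2 s' a' s'') * V1 (h+1) s'')
          = ∑ a' : A, ∑ s'' : S,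
            π1 h s a' * (P1 s a' s'' - P2 s a' s'') * V1 (h+1) s'' := by
        simp [hρ0, ite_mul, Finset.sum_ite_eq, Finset.sum_ite_eq']
      rw [hA]
      -- factoring lemma
      have factor : ∀ (h' : ℕ) (g : S → ℝ),
          (∑ s' : S, ∑ a' : A, ∑ s'' : S,
            g s' * π1 h' s' a' * (P1 s' a' s'' - P2 s' a' s'') * V1 (h'+1) s'')
          = ∑ s' : S, g s' * ∑ a' : A, ∑ s'' : S,
              π1 h' s' a' * (P1 s' a' s'' - P2 s' a' s'') * V1 (h'+1) s'' := by
        intro h' g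
        refine Finset.sum_congr rfl fun s' _ => ?_
        rw [Finset.mul_sum]
        refine Finset.sum_congr rfl fun a' _ => ?_
        rw [Finset.mul_sum]
        exact Finset.sum_congr rfl fun s'' _ => by ring
      -- rewrite the remaining terms using Chapman–Kolmogorov
      have hB : ∀ h' ∈ Finset.Icc (h+1) H,
          (∑ s' : S, ∑ a' : A, ∑ s'' : S,
            ρ h h' s s' * π1 h' s' a' * (P1 s' a' s'' - P2 s' a' s'') * V1 (h'+1) s'')
          = ∑ u : S, (∑ a : A, π1 h s a * P2 s a u) *
              (∑ s' : S, ∑ a' : A, ∑ s'' : S,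
                ρ (h+1) h' u s' * π1 h' s' a' * (P1 s' a' s'' - P2 s' a' s'') * V1 (h'+1) s'') := by
        intro h' hmem
        have hge : h + 1 ≤ h' := (Finset.mem_Icc.mp hmem).1
        calc (∑ s' : S, ∑ a' : A, ∑ s'' : S,
              ρ h h' s s' * π1 h' s' a' * (P1 s' a' s'' - P2 s' a' s'') * V1 (h'+1) s'')
            = ∑ s' : S, ρ h h' s s' * ∑ a' : A, ∑ s'' : S,
                π1 h' s' a' * (P1 s' a' s'' - P2 s' a' s'') * V1 (h'+1) s'' :=
              factor h' _
          _ = ∑ s' : S, ∑ u : S, ((∑ a : A, π1 h s a * P2 s a u) * ρ (h+1) h' u s') *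
                ∑ a' : A, ∑ s'' : S,
                  π1 h' s' a' * (P1 s' a' s'' - P2 s' a' s'') * V1 (h'+1) s'' := by
              refine Finset.sum_congr rfl fun s' _ => ?_
              rw [CK' h h' hge s s', Finset.sum_mul]
          _ = ∑ u : S, ∑ s' : S, ((∑ a : A, π1 h s a * P2 s a u) * ρ (h+1) h' u s') *
                ∑ a' : A, ∑ s'' : S,
                  π1 h' s' a' * (P1 s' a' s'' - P2 s' a' s'') * V1 (h'+1) s'' :=
              Finset.sum_comm
          _ = ∑ u : S, (∑ a : A, π1 h s a * P2 s a u) *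
                ∑ s' : S, ρ (h+1) h' u s' * ∑ a' : A, ∑ s'' : S,
                  π1 h' s' a' * (P1 s' a' s'' - P2 s' a' s'') * V1 (h'+1) s'' := by
              refine Finset.sum_congr rfl fun u _ => ?_
              rw [Finset.mul_sum]
              exact Finset.sum_congr rfl fun s' _ => by ring
          _ = ∑ u : S, (∑ a : A, π1 h s a * P2 s a u) *
              (∑ s' : S, ∑ a' : A, ∑ s'' : S,
                ρ (h+1) h' u s' * π1 h' s' a' * (P1 s' a' s'' - P2 s' a' s'') * V1 (h'+1) s'') := by
              refine Finset.sum_congr rfl fun u _ => ?_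
              rw [factor h' (fun s' => ρ (h+1) h' u s')]
      rw [Finset.sum_congr rfl hB]
      -- use the inductive hypothesis
      have hIH : ∀ u : S, (∑ h' ∈ Finset.Icc (h+1) H, ∑ s' : S, ∑ a' : A, ∑ s'' : S,
            ρ (h+1) h' u s' * π1 h' s' a' * (P1 s' a' s'' - P2 s' a' s'') * V1 (h'+1) s'')
          = V1 (h+1) u - W (h+1) u := fun u => (ih (h+1) (by omega) (by omega) u).symm
      have hBsum : (∑ h' ∈ Finset.Icc (h+1) H, ∑ u : S,
            (∑ a : A, π1 h s a * P2 s a u) *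
              (∑ s' : S, ∑ a' : A, ∑ s'' : S,
                ρ (h+1) h' u s' * π1 h' s' a' * (P1 s' a' s'' - P2 s' a' s'') * V1 (h'+1) s''))
          = ∑ u : S, (∑ a : A, π1 h s a * P2 s a u) * (V1 (h+1) u - W (h+1) u) := by
        rw [Finset.sum_comm]
        refine Finset.sum_congr rfl fun u _ => ?_
        rw [← Finset.mul_sum, hIH u]
      rw [hBsum]
      -- now compute `V1 h s - W h s` directly
      rw [hV1 h hlt s, hWrec h hlt s, ← Finset.sum_sub_distrib]
      have expand : ∀ a : A,
          π1 h s a * (r h s a + ∑ s' : S, P1 s a s' * V1 (h+1) s')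
            - π1 h s a * (r h s a + ∑ s' : S, P2 s a s' * W (h+1) s')
          = (∑ s'' : S, π1 h s a * (P1 s a s'' - P2 s a s'') * V1 (h+1) s'')
            + ∑ u : S, π1 h s a * P2 s a u * (V1 (h+1) u - W (h+1) u) := by
        intro a
        have : π1 h s a * (r h s a + ∑ s' : S, P1 s a s' * V1 (h+1) s')
            - π1 h s a * (r h s a + ∑ s' : S, P2 s a s' * W (h+1) s')
            = ∑ s' : S, (π1 h s a * (P1 s a s' * V1 (h+1) s')
                - π1 h s a * (P2 s a s' * W (h+1) s')) := by
          rw [Finset.sum_sub_distrib, ← Finset.mul_sum, ← Finset.mul_sum]; ring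
        rw [this, ← Finset.sum_add_distrib]
        exact Finset.sum_congr rfl fun s' _ => by ring
      rw [Finset.sum_congr rfl (fun a _ => expand a), Finset.sum_add_distrib]
      congr 1
      rw [Finset.sum_comm]
      exact Finset.sum_congr rfl fun u _ => by rw [Finset.sum_mul]
  -- conclude
  intro h hh s
  have := E (H - h) h rfl hh s
  linarith [hWle h s, this.le]
end

section
/- In a finite-horizon MDP M with reward r, for any policy π and all s, h: V*_{M∪r,h}(s) − V^π_{M∪r,h}(s) = − Σ_{h'=h}^{H} Σ_{s',a'} ρ^π_{h,h'}(s',a'|s) · A*_{h'}(s',a'), where A*_{h}(s,a) = Q*_h(s,a) − V*_h(s) is the optimal advantage function (which is nonpositive everywhere). -/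
open Finset

/-- Performance-difference lemma, cf. Lemma B.13 of the paper / Kakade
& Langford. For any policy `π` and all `s, h`:
`V*_h(s) − V^π_h(s) = −∑_{h'=h}^H ∑_{s',a'} ρ^π_{h,h'}(s',a'|s) A*_{h'}(s',a')`,
where `A*_h(s,a) = Q*_h(s,a) − V*_h(s)` is the (everywhere nonpositive) optimal
advantage function. -/
theorem stmt8 {S A : Type*} [Fintype S] [Fintype A] [DecidableEq S] [DecidableEq A]
    (H : ℕ) (P : S → A → S → ℝ)
    (hPnn : ∀ s a s', 0 ≤ P s a s') (hPsum : ∀ s a, ∑ s' : S, P s a s' = 1)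
    (r : ℕ → S → A → ℝ)
    (π : ℕ → S → A → ℝ)
    (hπnn : ∀ h s a, 0 ≤ π h s a) (hπsum : ∀ h s, ∑ a : A, π h s a = 1)
    (Qs : ℕ → S → A → ℝ) (Vs : ℕ → S → ℝ)
    -- `Qs`, `Vs` satisfy the Bellman optimality equations with terminal value 0
    (hQs0 : ∀ h, H ≤ h → ∀ s a, Qs h s a = 0)
    (hVs0 : ∀ h, H ≤ h → ∀ s, Vs h s = 0)
    (hQs : ∀ h, h < H → ∀ s a, Qs h s a = r h s a + ∑ s' : S, P s a s' * Vs (h+1) s')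
    (hVs : ∀ h, h < H → ∀ s,
      (∀ a, Qs h s a ≤ Vs h s) ∧ (∃ a, Vs h s = Qs h s a))
    -- `Vp = V^π` is the value function of `π`
    (Vp : ℕ → S → ℝ)
    (hVp0 : ∀ h, H ≤ h → ∀ s, Vp h s = 0)
    (hVp : ∀ h, h < H → ∀ s, Vp h s =
      ∑ a : A, π h s a * (r h s a + ∑ s' : S, P s a s' * Vp (h+1) s'))
    -- state-action visitation probabilities of `π` starting from `s` at time `h`
    (ρ : ℕ → ℕ → S → S → A → ℝ)
    (hρ0 : ∀ h s s' a', ρ h h s s' a' = π h s' a' * (if s' = s then 1 else 0))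
    (hρ : ∀ h h' s s' a', ρ h (h'+1) s s' a' =
      ∑ s'' : S, ∑ a'' : A, π (h'+1) s' a' * P s'' a'' s' * ρ h h' s s'' a'') :
    (∀ h, h ≤ H → ∀ s : S,
      Vs h s - Vp h s =
        -(∑ h' ∈ Finset.Icc h H, ∑ s' : S, ∑ a' : A,
          ρ h h' s s' a' * (Qs h' s' a' - Vs h' s'))) ∧
    (∀ h, h ≤ H → ∀ s a, Qs h s a - Vs h s ≤ 0) := by
  classical
  -- Advantage nonpositivity
  have hA : ∀ h, h ≤ H → ∀ s a, Qs h s a - Vs h s ≤ 0 := by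
    intro h hh s a
    rcases lt_or_eq_of_le hh with h1 | h1
    · have := (hVs h h1 s).1 a; linarith
    · rw [hQs0 h h1.ge, hVs0 h h1.ge]; simp
  refine ⟨?_, hA⟩
  -- a generic 4-fold sum reordering
  have swap4 : ∀ (f : S → A → A → S → ℝ),
      (∑ t : S, ∑ b : A, ∑ a : A, ∑ s' : S, f t b a s')
        = ∑ a : A, ∑ s' : S, ∑ t : S, ∑ b : A, f t b a s' := by
    intro f
    calc (∑ t : S, ∑ b : A, ∑ a : A, ∑ s' : S, f t b a s')
        = ∑ t : S, ∑ a : A, ∑ b : A, ∑ s' : S, f t b a s' :=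
          Finset.sum_congr rfl fun t _ => Finset.sum_comm
      _ = ∑ a : A, ∑ t : S, ∑ b : A, ∑ s' : S, f t b a s' := Finset.sum_comm
      _ = ∑ a : A, ∑ t : S, ∑ s' : S, ∑ b : A, f t b a s' :=
          Finset.sum_congr rfl fun a _ => Finset.sum_congr rfl fun t _ => Finset.sum_comm
      _ = ∑ a : A, ∑ s' : S, ∑ t : S, ∑ b : A, f t b a s' :=
          Finset.sum_congr rfl fun a _ => Finset.sum_comm
  -- composition lemma for visitation probabilities
  have comp : ∀ h h', h + 1 ≤ h' → ∀ s t b,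
      ρ h h' s t b = ∑ a : A, ∑ s' : S, π h s a * P s a s' * ρ (h+1) h' s' t b := by
    intro h
    refine Nat.le_induction ?_ ?_
    · intro s t b
      rw [hρ h h s t b]
      simp only [hρ0, mul_ite, mul_one, mul_zero]
      rw [Finset.sum_comm]
      simp only [Finset.sum_ite_eq, Finset.sum_ite_eq', Finset.mem_univ, if_true]
      apply Finset.sum_congr rfl; intro a _
      ring
    · intro h' hle ih s t b
      rw [hρ h h' s t b]
      calc (∑ u : S, ∑ c : A, π (h'+1) t b * P u c t * ρ h h' s u c)
          = ∑ u : S, ∑ c : A, ∑ a : A, ∑ s' : S,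
              π (h'+1) t b * P u c t * (π h s a * P s a s' * ρ (h+1) h' s' u c) := by
            apply Finset.sum_congr rfl; intro u _
            apply Finset.sum_congr rfl; intro c _
            rw [ih s u c]
            simp only [Finset.mul_sum]
        _ = ∑ a : A, ∑ s' : S, ∑ u : S, ∑ c : A,
              π (h'+1) t b * P u c t * (π h s a * P s a s' * ρ (h+1) h' s' u c) :=
            swap4 _
        _ = ∑ a : A, ∑ s' : S, π h s a * P s a s' * ρ (h+1) (h'+1) s' t b := by
            apply Finset.sum_congr rfl; intro a _
            apply Finset.sum_congr rfl; intro s' _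
            rw [hρ (h+1) h' s' t b]
            simp only [Finset.mul_sum]
            apply Finset.sum_congr rfl; intro u _
            apply Finset.sum_congr rfl; intro c _
            ring
  -- main downward induction
  have main : ∀ n h, h + n = H → ∀ s : S,
      Vs h s - Vp h s =
        -(∑ h' ∈ Finset.Icc h H, ∑ s' : S, ∑ a' : A,
          ρ h h' s s' a' * (Qs h' s' a' - Vs h' s')) := by
    intro n
    induction n with
    | zero =>
      intro h hh s
      have hH : h = H := by omega
      subst hH
      rw [Finset.Icc_self, Finset.sum_singleton]
      simp [hQs0 h le_rfl, hVs0 h le_rfl, hVp0 h le_rfl]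
    | succ n ih =>
      intro h hh s
      have hhH : h < H := by omega
      have hIH := ih (h+1) (by omega)
      have hsplit : Finset.Icc h H = insert h (Finset.Icc (h+1) H) := by
        ext x; simp only [Finset.mem_Icc, Finset.mem_insert]; omega
      rw [hsplit, Finset.sum_insert (by simp [Finset.mem_Icc])]
      -- the current-step term
      have B : (∑ s' : S, ∑ a' : A, ρ h h s s' a' * (Qs h s' a' - Vs h s'))
          = ∑ a : A, π h s a * (Qs h s a - Vs h s) := by
        simp only [hρ0, mul_ite, ite_mul, mul_one, mul_zero, zero_mul]
        rw [Finset.sum_comm]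
        simp
      -- the future term, rewritten through one-step composition
      have C : (∑ h' ∈ Finset.Icc (h+1) H, ∑ t : S, ∑ b : A,
            ρ h h' s t b * (Qs h' t b - Vs h' t))
          = ∑ a : A, π h s a * ∑ s' : S, P s a s' *
              (∑ h' ∈ Finset.Icc (h+1) H, ∑ t : S, ∑ b : A,
                ρ (h+1) h' s' t b * (Qs h' t b - Vs h' t)) := by
        have step : ∀ h' ∈ Finset.Icc (h+1) H,
            (∑ t : S, ∑ b : A, ρ h h' s t b * (Qs h' t b - Vs h' t))
              = ∑ a : A, ∑ s' : S, π h s a * (P s a s' *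
                  (∑ t : S, ∑ b : A, ρ (h+1) h' s' t b * (Qs h' t b - Vs h' t))) := by
          intro h' hmem
          rw [Finset.mem_Icc] at hmem
          have hc : ∀ t b, ρ h h' s t b
              = ∑ a : A, ∑ s' : S, π h s a * P s a s' * ρ (h+1) h' s' t b :=
            comp h h' hmem.1 s
          simp only [hc, Finset.sum_mul, Finset.mul_sum]
          rw [swap4 (fun t b a s' => π h s a * P s a s' * ρ (h+1) h' s' t b * (Qs h' t b - Vs h' t))]
          apply Finset.sum_congr rfl; intro a _
          apply Finset.sum_congr rfl; intro s' _
          apply Finset.sum_congr rfl; intro t _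
          apply Finset.sum_congr rfl; intro b _
          ring
        rw [Finset.sum_congr rfl step, Finset.sum_comm]
        apply Finset.sum_congr rfl; intro a _
        conv_lhs => rw [Finset.sum_comm]
        simp only [Finset.mul_sum]
      -- rewrite the future term using the inductive hypothesis
      have D : ∑ a : A, π h s a * ∑ s' : S, P s a s' * (Vs (h+1) s' - Vp (h+1) s')
          = -(∑ h' ∈ Finset.Icc (h+1) H, ∑ t : S, ∑ b : A,
              ρ h h' s t b * (Qs h' t b - Vs h' t)) := by
        rw [C, ← Finset.sum_neg_distrib]
        apply Finset.sum_congr rfl; intro a _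
        have e : ∑ s' : S, P s a s' * (Vs (h+1) s' - Vp (h+1) s')
            = -(∑ s' : S, P s a s' *
                (∑ h' ∈ Finset.Icc (h+1) H, ∑ t : S, ∑ b : A,
                  ρ (h+1) h' s' t b * (Qs h' t b - Vs h' t))) := by
          rw [← Finset.sum_neg_distrib]
          apply Finset.sum_congr rfl; intro s' _
          rw [hIH s']; ring
        rw [e]; ring
      have e2 : ∀ a : A, π h s a * Vs h s
            - π h s a * (r h s a + ∑ s' : S, P s a s' * Vp (h+1) s')
          = -(π h s a * (Qs h s a - Vs h s))
            + π h s a * ∑ s' : S, P s a s' * (Vs (h+1) s' - Vp (h+1) s') := by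
        intro a
        rw [hQs h hhH s a]
        simp only [mul_sub, Finset.sum_sub_distrib]
        ring
      calc Vs h s - Vp h s
          = ∑ a : A, (π h s a * Vs h s
              - π h s a * (r h s a + ∑ s' : S, P s a s' * Vp (h+1) s')) := by
            rw [Finset.sum_sub_distrib, ← Finset.sum_mul, hπsum, one_mul, ← hVp h hhH s]
        _ = ∑ a : A, (-(π h s a * (Qs h s a - Vs h s))
              + π h s a * ∑ s' : S, P s a s' * (Vs (h+1) s' - Vp (h+1) s')) :=
            Finset.sum_congr rfl fun a _ => e2 a
        _ = -(∑ a : A, π h s a * (Qs h s a - Vs h s))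
              + ∑ a : A, π h s a * ∑ s' : S, P s a s' * (Vs (h+1) s' - Vp (h+1) s') := by
            rw [Finset.sum_add_distrib, Finset.sum_neg_distrib]
        _ = _ := by rw [D, ← B]; ring
  intro h hh s
  exact main (H - h) h (by omega) s
end

section
/- Let M be a finite-horizon MDP without reward with true transition model P and estimated transition model P̂, and let C_h : S × A → ℝ_{≥0} be bounds such that for every reward r, policy π, state s, action a, timestep h: |Σ_{s'} (P(s'|s,a) − P̂(s'|s,a)) V^π_{M∪r,h+1}(s')| ≤ C_h(s,a). Define E_H(s,a) = 0 and E_h(s,a) = min((H−h)R_max, C_h(s,a) + Σ_{s'} P̂(s'|s,a) max_{a'} E_{h+1}(s',a')). Then for every policy π, reward r bounded in [0, R_max], and all s, a, h: |Q^π_{M̂∪r,h}(s,a) − Q^π_{M∪r,h}(s,a)| ≤ E_h(s,a), where M̂ uses transition model P̂. -/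
open Finset

/-- cf. Lemma B.10 of the paper. If `C_h(s,a)` bounds the transition
estimation error on value functions, and `E` is defined by the error recursion
`E_H = 0`, `E_h(s,a) = min((H−h)Rmax, C_h(s,a) + ∑_{s'} P̂(s'|s,a) max_{a'} E_{h+1}(s',a'))`,
then for every policy `π` and reward `r` bounded in `[0, Rmax]`:
`|Q^π_{M̂∪r,h}(s,a) − Q^π_{M∪r,h}(s,a)| ≤ E_h(s,a)`. -/
theorem stmt9 {S A : Type*} [Fintype S] [Fintype A] [Nonempty A]
    [DecidableEq S] [DecidableEq A]
    (H : ℕ) (Rmax : ℝ) (hR : 0 ≤ Rmax)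
    (P Ph : S → A → S → ℝ)
    (hPnn : ∀ s a s', 0 ≤ P s a s') (hPsum : ∀ s a, ∑ s' : S, P s a s' = 1)
    (hPhnn : ∀ s a s', 0 ≤ Ph s a s') (hPhsum : ∀ s a, ∑ s' : S, Ph s a s' = 1)
    (C : ℕ → S → A → ℝ)
    -- the good event: `C` bounds the transition error against every value function
    (hC : ∀ (r' π' Q' : ℕ → S → A → ℝ),
      (∀ h s a, 0 ≤ r' h s a ∧ r' h s a ≤ Rmax) →
      (∀ h s a, 0 ≤ π' h s a) → (∀ h s, ∑ a : A, π' h s a = 1) →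
      (∀ h, H ≤ h → ∀ s a, Q' h s a = 0) →
      (∀ h, h < H → ∀ s a, Q' h s a =
        r' h s a + ∑ s' : S, P s a s' * ∑ a' : A, π' (h+1) s' a' * Q' (h+1) s' a') →
      ∀ h, h < H → ∀ s a,
        |∑ s' : S, (P s a s' - Ph s a s') *
          (∑ a' : A, π' (h+1) s' a' * Q' (h+1) s' a')| ≤ C h s a)
    (E : ℕ → S → A → ℝ)
    (hE0 : ∀ h, H ≤ h → ∀ s a, E h s a = 0)
    (hE : ∀ h, h < H → ∀ s a, E h s a =
      min (((H - h : ℕ) : ℝ) * Rmax)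
        (C h s a + ∑ s' : S, Ph s a s' *
          Finset.univ.sup' Finset.univ_nonempty (fun a' => E (h+1) s' a')))
    (r : ℕ → S → A → ℝ)
    (hr : ∀ h s a, 0 ≤ r h s a ∧ r h s a ≤ Rmax)
    (π : ℕ → S → A → ℝ)
    (hπnn : ∀ h s a, 0 ≤ π h s a) (hπsum : ∀ h s, ∑ a : A, π h s a = 1)
    (Q Qh : ℕ → S → A → ℝ)
    -- `Q = Q^π_{M∪r}` (true transitions), `Qh = Q^π_{M̂∪r}` (estimated transitions)
    (hQ0 : ∀ h, H ≤ h → ∀ s a, Q h s a = 0)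
    (hQ : ∀ h, h < H → ∀ s a, Q h s a =
      r h s a + ∑ s' : S, P s a s' * ∑ a' : A, π (h+1) s' a' * Q (h+1) s' a')
    (hQh0 : ∀ h, H ≤ h → ∀ s a, Qh h s a = 0)
    (hQh : ∀ h, h < H → ∀ s a, Qh h s a =
      r h s a + ∑ s' : S, Ph s a s' * ∑ a' : A, π (h+1) s' a' * Qh (h+1) s' a') :
    ∀ h s a, |Qh h s a - Q h s a| ≤ E h s a := by

  -- Boundedness of Q-functions
  have Qbound : ∀ (Q' : ℕ → S → A → ℝ) (Pq : S → A → S → ℝ),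
      (∀ s a s', 0 ≤ Pq s a s') → (∀ s a, ∑ s' : S, Pq s a s' = 1) →
      (∀ h, H ≤ h → ∀ s a, Q' h s a = 0) →
      (∀ h, h < H → ∀ s a, Q' h s a =
        r h s a + ∑ s' : S, Pq s a s' * ∑ a' : A, π (h+1) s' a' * Q' (h+1) s' a') →
      ∀ h s a, 0 ≤ Q' h s a ∧ Q' h s a ≤ ((H - h : ℕ) : ℝ) * Rmax := by
    intro Q' Pq hnn hsum h0 hrec
    have aux : ∀ n h, H ≤ h + n → ∀ s a,
        0 ≤ Q' h s a ∧ Q' h s a ≤ ((H - h : ℕ) : ℝ) * Rmax := by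
      intro n
      induction n with
      | zero =>
        intro h hh s a
        rw [h0 h (by omega)]
        exact ⟨le_refl 0, by positivity⟩
      | succ n ih =>
        intro h hh s a
        by_cases hhH : H ≤ h
        · rw [h0 h hhH]; exact ⟨le_refl 0, by positivity⟩
        · push_neg at hhH
          rw [hrec h hhH]
          have hV : ∀ s', 0 ≤ (∑ a' : A, π (h+1) s' a' * Q' (h+1) s' a') ∧
              (∑ a' : A, π (h+1) s' a' * Q' (h+1) s' a') ≤ ((H - (h+1) : ℕ) : ℝ) * Rmax := by
            intro s'
            have hq := fun a' => ih (h+1) (by omega) s' a'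
            refine ⟨Finset.sum_nonneg fun a' _ => mul_nonneg (hπnn _ _ _) (hq a').1, ?_⟩
            calc ∑ a' : A, π (h+1) s' a' * Q' (h+1) s' a'
                ≤ ∑ a' : A, π (h+1) s' a' * (((H - (h+1) : ℕ) : ℝ) * Rmax) :=
                  Finset.sum_le_sum fun a' _ =>
                    mul_le_mul_of_nonneg_left (hq a').2 (hπnn _ _ _)
              _ = ((H - (h+1) : ℕ) : ℝ) * Rmax := by
                  rw [← Finset.sum_mul, hπsum, one_mul]
          constructor
          · exact add_nonneg (hr h s a).1
              (Finset.sum_nonneg fun s' _ => mul_nonneg (hnn _ _ _) (hV s').1)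
          · have hsum2 : (∑ s' : S, Pq s a s' * ∑ a' : A, π (h+1) s' a' * Q' (h+1) s' a')
                ≤ ((H - (h+1) : ℕ) : ℝ) * Rmax := by
              calc ∑ s' : S, Pq s a s' * ∑ a' : A, π (h+1) s' a' * Q' (h+1) s' a'
                  ≤ ∑ s' : S, Pq s a s' * (((H - (h+1) : ℕ) : ℝ) * Rmax) :=
                    Finset.sum_le_sum fun s' _ =>
                      mul_le_mul_of_nonneg_left (hV s').2 (hnn _ _ _)
                _ = ((H - (h+1) : ℕ) : ℝ) * Rmax := by
                    rw [← Finset.sum_mul, hsum, one_mul]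
            have hcast : ((H - h : ℕ) : ℝ) = ((H - (h+1) : ℕ) : ℝ) + 1 := by
              have : H - h = (H - (h+1)) + 1 := by omega
              rw [this]; push_cast; ring
            have := (hr h s a).2
            rw [hcast]
            nlinarith [hsum2]
    exact fun h s a => aux H h (by omega) s a
  have QbP := Qbound Q P hPnn hPsum hQ0 hQ
  have QbPh := Qbound Qh Ph hPhnn hPhsum hQh0 hQh
  -- Main induction
  have main : ∀ n h, H ≤ h + n → ∀ s a, |Qh h s a - Q h s a| ≤ E h s a := by
    intro n
    induction n with
    | zero =>
      intro h hh s a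
      rw [hQ0 h (by omega), hQh0 h (by omega), hE0 h (by omega)]
      simp
    | succ n ih =>
      intro h hh s a
      by_cases hhH : H ≤ h
      · rw [hQ0 h hhH, hQh0 h hhH, hE0 h hhH]; simp
      · push_neg at hhH
        rw [hE h hhH s a]
        refine le_min ?_ ?_
        · -- trivial bound by (H-h) Rmax
          obtain ⟨h1, h2⟩ := QbP h s a
          obtain ⟨h3, h4⟩ := QbPh h s a
          rw [abs_sub_le_iff]
          constructor <;> linarith
        · -- recursive bound
          set V : S → ℝ := fun s' => ∑ a' : A, π (h+1) s' a' * Q (h+1) s' a' with hVdef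
          set Vh : S → ℝ := fun s' => ∑ a' : A, π (h+1) s' a' * Qh (h+1) s' a' with hVhdef
          have hdiff : Qh h s a - Q h s a =
              (∑ s' : S, Ph s a s' * (Vh s' - V s')) -
              (∑ s' : S, (P s a s' - Ph s a s') * V s') := by
            rw [hQ h hhH s a, hQh h hhH s a]
            simp only [mul_sub, sub_mul, Finset.sum_sub_distrib]
            ring
          have hCbd : |∑ s' : S, (P s a s' - Ph s a s') * V s'| ≤ C h s a :=
            hC r π Q hr hπnn hπsum hQ0 hQ h hhH s a
          have hVbd : ∀ s', |Vh s' - V s'| ≤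
              Finset.univ.sup' Finset.univ_nonempty (fun a' => E (h+1) s' a') := by
            intro s'
            have : Vh s' - V s' = ∑ a' : A, π (h+1) s' a' * (Qh (h+1) s' a' - Q (h+1) s' a') := by
              simp only [hVdef, hVhdef, mul_sub, Finset.sum_sub_distrib]
            rw [this]
            calc |∑ a' : A, π (h+1) s' a' * (Qh (h+1) s' a' - Q (h+1) s' a')|
                ≤ ∑ a' : A, |π (h+1) s' a' * (Qh (h+1) s' a' - Q (h+1) s' a')| :=
                  Finset.abs_sum_le_sum_abs _ _
              _ = ∑ a' : A, π (h+1) s' a' * |Qh (h+1) s' a' - Q (h+1) s' a'| := by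
                  refine Finset.sum_congr rfl fun a' _ => ?_
                  rw [abs_mul, abs_of_nonneg (hπnn _ _ _)]
              _ ≤ ∑ a' : A, π (h+1) s' a' *
                    (Finset.univ.sup' Finset.univ_nonempty (fun a' => E (h+1) s' a')) := by
                  refine Finset.sum_le_sum fun a' _ => ?_
                  refine mul_le_mul_of_nonneg_left ?_ (hπnn _ _ _)
                  exact le_trans (ih (h+1) (by omega) s' a')
                    (Finset.le_sup' (fun a' => E (h+1) s' a') (Finset.mem_univ a'))
              _ = Finset.univ.sup' Finset.univ_nonempty (fun a' => E (h+1) s' a') := by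
                  rw [← Finset.sum_mul, hπsum, one_mul]
          calc |Qh h s a - Q h s a|
              ≤ |∑ s' : S, Ph s a s' * (Vh s' - V s')| +
                |∑ s' : S, (P s a s' - Ph s a s') * V s'| := by
                rw [hdiff]; exact abs_sub _ _
            _ ≤ (∑ s' : S, Ph s a s' *
                  Finset.univ.sup' Finset.univ_nonempty (fun a' => E (h+1) s' a')) + C h s a := by
                refine add_le_add ?_ hCbd
                calc |∑ s' : S, Ph s a s' * (Vh s' - V s')|
                    ≤ ∑ s' : S, |Ph s a s' * (Vh s' - V s')| := Finset.abs_sum_le_sum_abs _ _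
                  _ ≤ ∑ s' : S, Ph s a s' *
                        Finset.univ.sup' Finset.univ_nonempty (fun a' => E (h+1) s' a') := by
                      refine Finset.sum_le_sum fun s' _ => ?_
                      rw [abs_mul, abs_of_nonneg (hPhnn _ _ _)]
                      exact mul_le_mul_of_nonneg_left (hVbd s') (hPhnn _ _ _)
            _ = C h s a + ∑ s' : S, Ph s a s' *
                  Finset.univ.sup' Finset.univ_nonempty (fun a' => E (h+1) s' a') := by ring
  exact fun h s a => main H h (by omega) s a
end

section
/- Let M̂ be a finite-horizon MDP without reward with transition model P̂, let r, r̂ be two reward functions such that |r_h(s,a) − r̂_h(s,a)| ≤ C_h(s,a) for all s, a, h, and define E_H(s,a) = 0 and E_h(s,a) = min((H−h)R_max, C_h(s,a) + Σ_{s'} P̂(s'|s,a) max_{a'} E_{h+1}(s',a')). Then for every policy π and all s, a, h: |Q^π_{M̂∪r̂,h}(s,a) − Q^π_{M̂∪r,h}(s,a)| ≤ E_h(s,a), provided both rewards are bounded in [0, R_max]. -/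
open Finset

private theorem qbound_aux {S A : Type*} [Fintype S] [Fintype A]
    (H : ℕ) (Rmax : ℝ) (hR : 0 ≤ Rmax)
    (Ph : S → A → S → ℝ)
    (hPhnn : ∀ s a s', 0 ≤ Ph s a s') (hPhsum : ∀ s a, ∑ s' : S, Ph s a s' = 1)
    (r : ℕ → S → A → ℝ)
    (hr : ∀ h s a, 0 ≤ r h s a ∧ r h s a ≤ Rmax)
    (π : ℕ → S → A → ℝ)
    (hπnn : ∀ h s a, 0 ≤ π h s a) (hπsum : ∀ h s, ∑ a : A, π h s a = 1)
    (Q : ℕ → S → A → ℝ)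
    (hQ0 : ∀ h, H ≤ h → ∀ s a, Q h s a = 0)
    (hQ : ∀ h, h < H → ∀ s a, Q h s a =
      r h s a + ∑ s' : S, Ph s a s' * ∑ a' : A, π (h+1) s' a' * Q (h+1) s' a') :
    ∀ k h, H ≤ h + k → ∀ s a, 0 ≤ Q h s a ∧ Q h s a ≤ ((H - h : ℕ) : ℝ) * Rmax := by
  intro k
  induction k with
  | zero =>
    intro h hh s a
    rw [hQ0 h (by omega)]
    simp [Nat.sub_eq_zero_of_le (by omega : H ≤ h)]
  | succ k ih =>
    intro h hh s a
    by_cases hcase : H ≤ h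
    · rw [hQ0 h hcase]; simp [Nat.sub_eq_zero_of_le hcase]
    push_neg at hcase
    rw [hQ h hcase]
    have ih' : ∀ s' a', 0 ≤ Q (h+1) s' a' ∧ Q (h+1) s' a' ≤ ((H - (h+1) : ℕ) : ℝ) * Rmax :=
      fun s' a' => ih (h+1) (by omega) s' a'
    have hinner : ∀ s', 0 ≤ (∑ a' : A, π (h+1) s' a' * Q (h+1) s' a') ∧
        (∑ a' : A, π (h+1) s' a' * Q (h+1) s' a') ≤ ((H - (h+1) : ℕ) : ℝ) * Rmax := by
      intro s'
      constructor
      · exact Finset.sum_nonneg fun a' _ => mul_nonneg (hπnn _ _ _) (ih' s' a').1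
      · calc (∑ a' : A, π (h+1) s' a' * Q (h+1) s' a')
            ≤ ∑ a' : A, π (h+1) s' a' * (((H - (h+1) : ℕ) : ℝ) * Rmax) :=
              Finset.sum_le_sum fun a' _ => mul_le_mul_of_nonneg_left (ih' s' a').2 (hπnn _ _ _)
          _ = ((H - (h+1) : ℕ) : ℝ) * Rmax := by
              rw [← Finset.sum_mul, hπsum]; ring
    have houter : 0 ≤ (∑ s' : S, Ph s a s' * ∑ a' : A, π (h+1) s' a' * Q (h+1) s' a') ∧
        (∑ s' : S, Ph s a s' * ∑ a' : A, π (h+1) s' a' * Q (h+1) s' a')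
          ≤ ((H - (h+1) : ℕ) : ℝ) * Rmax := by
      constructor
      · exact Finset.sum_nonneg fun s' _ => mul_nonneg (hPhnn _ _ _) (hinner s').1
      · calc (∑ s' : S, Ph s a s' * ∑ a' : A, π (h+1) s' a' * Q (h+1) s' a')
            ≤ ∑ s' : S, Ph s a s' * (((H - (h+1) : ℕ) : ℝ) * Rmax) :=
              Finset.sum_le_sum fun s' _ => mul_le_mul_of_nonneg_left (hinner s').2 (hPhnn _ _ _)
          _ = ((H - (h+1) : ℕ) : ℝ) * Rmax := by rw [← Finset.sum_mul, hPhsum]; ring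
    have hcast : ((H - h : ℕ) : ℝ) = ((H - (h+1) : ℕ) : ℝ) + 1 := by
      have h1 : H - h = (H - (h+1)) + 1 := by omega
      rw [h1]; push_cast; ring
    constructor
    · linarith [(hr h s a).1, houter.1]
    · rw [hcast]
      have := (hr h s a).2
      linarith [houter.2]

/-- cf. Lemma B.11 of the paper. If `|r_h(s,a) − r̂_h(s,a)| ≤ C_h(s,a)`
and `E` is defined by `E_H = 0`,
`E_h(s,a) = min((H−h)Rmax, C_h(s,a) + ∑_{s'} P̂(s'|s,a) max_{a'} E_{h+1}(s',a'))`,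
then for every policy `π`: `|Q^π_{M̂∪r̂,h}(s,a) − Q^π_{M̂∪r,h}(s,a)| ≤ E_h(s,a)`. -/
theorem stmt10 {S A : Type*} [Fintype S] [Fintype A] [Nonempty A]
    [DecidableEq S] [DecidableEq A]
    (H : ℕ) (Rmax : ℝ) (hR : 0 ≤ Rmax)
    (Ph : S → A → S → ℝ)
    (hPhnn : ∀ s a s', 0 ≤ Ph s a s') (hPhsum : ∀ s a, ∑ s' : S, Ph s a s' = 1)
    (r rh : ℕ → S → A → ℝ)
    (hr : ∀ h s a, 0 ≤ r h s a ∧ r h s a ≤ Rmax)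
    (hrh : ∀ h s a, 0 ≤ rh h s a ∧ rh h s a ≤ Rmax)
    (C : ℕ → S → A → ℝ)
    (hrC : ∀ h s a, |r h s a - rh h s a| ≤ C h s a)
    (E : ℕ → S → A → ℝ)
    (hE0 : ∀ h, H ≤ h → ∀ s a, E h s a = 0)
    (hE : ∀ h, h < H → ∀ s a, E h s a =
      min (((H - h : ℕ) : ℝ) * Rmax)
        (C h s a + ∑ s' : S, Ph s a s' *
          Finset.univ.sup' Finset.univ_nonempty (fun a' => E (h+1) s' a')))
    (π : ℕ → S → A → ℝ)
    (hπnn : ∀ h s a, 0 ≤ π h s a) (hπsum : ∀ h s, ∑ a : A, π h s a = 1)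
    (Qr Qrh : ℕ → S → A → ℝ)
    -- `Qr = Q^π_{M̂∪r}`, `Qrh = Q^π_{M̂∪r̂}` (both under the estimated transitions `P̂`)
    (hQr0 : ∀ h, H ≤ h → ∀ s a, Qr h s a = 0)
    (hQr : ∀ h, h < H → ∀ s a, Qr h s a =
      r h s a + ∑ s' : S, Ph s a s' * ∑ a' : A, π (h+1) s' a' * Qr (h+1) s' a')
    (hQrh0 : ∀ h, H ≤ h → ∀ s a, Qrh h s a = 0)
    (hQrh : ∀ h, h < H → ∀ s a, Qrh h s a =
      rh h s a + ∑ s' : S, Ph s a s' * ∑ a' : A, π (h+1) s' a' * Qrh (h+1) s' a') :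
    ∀ h s a, |Qrh h s a - Qr h s a| ≤ E h s a := by
  have hQrB := qbound_aux H Rmax hR Ph hPhnn hPhsum r hr π hπnn hπsum Qr hQr0 hQr
  have hQrhB := qbound_aux H Rmax hR Ph hPhnn hPhsum rh hrh π hπnn hπsum Qrh hQrh0 hQrh
  have key : ∀ k h, H ≤ h + k → ∀ s a, |Qrh h s a - Qr h s a| ≤ E h s a := by
    intro k
    induction k with
    | zero =>
      intro h hh s a
      rw [hQr0 h (by omega), hQrh0 h (by omega), hE0 h (by omega)]
      simp
    | succ k ih =>
      intro h hh s a
      by_cases hcase : H ≤ h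
      · rw [hQr0 h hcase, hQrh0 h hcase, hE0 h hcase]; simp
      push_neg at hcase
      rw [hE h hcase]
      apply le_min
      · -- crude bound
        have h1 := hQrB (H - h) h (by omega) s a
        have h2 := hQrhB (H - h) h (by omega) s a
        rw [abs_sub_le_iff]
        constructor <;> linarith [h1.1, h1.2, h2.1, h2.2]
      · rw [hQr h hcase, hQrh h hcase]
        have hrw : rh h s a + (∑ s' : S, Ph s a s' * ∑ a' : A, π (h+1) s' a' * Qrh (h+1) s' a')
            - (r h s a + ∑ s' : S, Ph s a s' * ∑ a' : A, π (h+1) s' a' * Qr (h+1) s' a')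
            = (rh h s a - r h s a) +
              ∑ s' : S, Ph s a s' * ∑ a' : A, π (h+1) s' a' * (Qrh (h+1) s' a' - Qr (h+1) s' a') := by
          simp only [mul_sub, Finset.sum_sub_distrib]
          ring
        rw [hrw]
        have hsup : ∀ s', |∑ a' : A, π (h+1) s' a' * (Qrh (h+1) s' a' - Qr (h+1) s' a')|
            ≤ Finset.univ.sup' Finset.univ_nonempty (fun a' => E (h+1) s' a') := by
          intro s'
          calc |∑ a' : A, π (h+1) s' a' * (Qrh (h+1) s' a' - Qr (h+1) s' a')|
              ≤ ∑ a' : A, |π (h+1) s' a' * (Qrh (h+1) s' a' - Qr (h+1) s' a')| :=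
                Finset.abs_sum_le_sum_abs _ _
            _ ≤ ∑ a' : A, π (h+1) s' a' *
                  Finset.univ.sup' Finset.univ_nonempty (fun a'' => E (h+1) s' a'') := by
                apply Finset.sum_le_sum
                intro a' _
                rw [abs_mul, abs_of_nonneg (hπnn _ _ _)]
                apply mul_le_mul_of_nonneg_left _ (hπnn _ _ _)
                exact le_trans (ih (h+1) (by omega) s' a')
                  (Finset.le_sup' (fun a'' => E (h+1) s' a'') (Finset.mem_univ a'))
            _ = Finset.univ.sup' Finset.univ_nonempty (fun a'' => E (h+1) s' a'') := by
                rw [← Finset.sum_mul, hπsum]; ring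
        calc |(rh h s a - r h s a) +
              ∑ s' : S, Ph s a s' * ∑ a' : A, π (h+1) s' a' * (Qrh (h+1) s' a' - Qr (h+1) s' a')|
            ≤ |rh h s a - r h s a| +
              |∑ s' : S, Ph s a s' * ∑ a' : A, π (h+1) s' a' * (Qrh (h+1) s' a' - Qr (h+1) s' a')| :=
              abs_add_le _ _
          _ ≤ C h s a + ∑ s' : S, Ph s a s' *
                Finset.univ.sup' Finset.univ_nonempty (fun a' => E (h+1) s' a') := by
              apply add_le_add
              · rw [abs_sub_comm]; exact hrC h s a
              · calc |∑ s' : S, Ph s a s' *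
                      ∑ a' : A, π (h+1) s' a' * (Qrh (h+1) s' a' - Qr (h+1) s' a')|
                    ≤ ∑ s' : S, |Ph s a s' *
                      ∑ a' : A, π (h+1) s' a' * (Qrh (h+1) s' a' - Qr (h+1) s' a')| :=
                      Finset.abs_sum_le_sum_abs _ _
                  _ ≤ ∑ s' : S, Ph s a s' *
                      Finset.univ.sup' Finset.univ_nonempty (fun a' => E (h+1) s' a') := by
                      apply Finset.sum_le_sum
                      intro s' _
                      rw [abs_mul, abs_of_nonneg (hPhnn _ _ _)]
                      exact mul_le_mul_of_nonneg_left (hsup s') (hPhnn _ _ _)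
  intro h s a
  exact key H h (by omega) s a
end

section
/- In the setting of the error upper bound E defined with estimated transitions, assume the 'good event' that for all s, a, h: |Σ_{s'}(P̂(s'|s,a) − P(s'|s,a)) f(s')| ≤ C_h(s,a) for every function f with 0 ≤ f ≤ (H−h−1)R_max (in particular for f(s') = max_{a'} E_{h+1}(s',a')). Then for all s, a, h: E_h(s,a) ≤ 2·C_h(s,a) + Σ_{s'} P(s'|s,a)·max_{a'} E_{h+1}(s',a'), where E is defined by E_H = 0 and E_h(s,a) = min((H−h)R_max, C_h(s,a) + Σ_{s'} P̂(s'|s,a) max_{a'} E_{h+1}(s',a')). -/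
open Finset

/-- cf. Lemma B.16 of the paper. Under the good event, the error
recursion under the estimated dynamics `P̂` can be converted into one under the true
dynamics `P` at the cost of doubling the confidence width:
`E_h(s,a) ≤ 2·C_h(s,a) + ∑_{s'} P(s'|s,a)·max_{a'} E_{h+1}(s',a')`. -/
theorem stmt12 {S A : Type*} [Fintype S] [Fintype A] [Nonempty A]
    [DecidableEq S] [DecidableEq A]
    (H : ℕ) (Rmax : ℝ) (hR : 0 ≤ Rmax)
    (P Ph : S → A → S → ℝ)
    (hPnn : ∀ s a s', 0 ≤ P s a s') (hPsum : ∀ s a, ∑ s' : S, P s a s' = 1)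
    (hPhnn : ∀ s a s', 0 ≤ Ph s a s') (hPhsum : ∀ s a, ∑ s' : S, Ph s a s' = 1)
    (C : ℕ → S → A → ℝ) (hCnn : ∀ h s a, 0 ≤ C h s a)
    -- the good event: the transition estimation error against any function `f` with
    -- `0 ≤ f ≤ (H−h−1)·Rmax` is bounded by `C_h(s,a)`
    (hGood : ∀ h, h < H → ∀ s a, ∀ f : S → ℝ,
      (∀ s', 0 ≤ f s') →
      (∀ s', f s' ≤ ((H - (h+1) : ℕ) : ℝ) * Rmax) →
      |∑ s' : S, (Ph s a s' - P s a s') * f s'| ≤ C h s a)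
    (E : ℕ → S → A → ℝ)
    (hE0 : ∀ h, H ≤ h → ∀ s a, E h s a = 0)
    (hE : ∀ h, h < H → ∀ s a, E h s a =
      min (((H - h : ℕ) : ℝ) * Rmax)
        (C h s a + ∑ s' : S, Ph s a s' *
          Finset.univ.sup' Finset.univ_nonempty (fun a' => E (h+1) s' a'))) :
    ∀ h, h < H → ∀ s a,
      E h s a ≤ 2 * C h s a + ∑ s' : S, P s a s' *
        Finset.univ.sup' Finset.univ_nonempty (fun a' => E (h+1) s' a') := by
  -- First: bounds on E
  have key : ∀ n h, H - h = n → ∀ s a, 0 ≤ E h s a ∧ E h s a ≤ ((H - h : ℕ) : ℝ) * Rmax := by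
    intro n
    induction n with
    | zero =>
      intro h hh s a
      have hHh : H ≤ h := Nat.le_of_sub_eq_zero hh
      rw [hE0 h hHh, hh]
      simp
    | succ n ih =>
      intro h hh s a
      have hhH : h < H := by omega
      have hnext : H - (h+1) = n := by omega
      have hg0 : ∀ s', 0 ≤ Finset.univ.sup' Finset.univ_nonempty (fun a' => E (h+1) s' a') := by
        intro s'
        obtain ⟨a0⟩ := ‹Nonempty A›
        exact le_trans (ih (h+1) hnext s' a0).1 (Finset.le_sup' _ (Finset.mem_univ a0))
      rw [hE h hhH s a]
      constructor
      · apply le_min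
        · positivity
        · have : 0 ≤ ∑ s' : S, Ph s a s' * Finset.univ.sup' Finset.univ_nonempty (fun a' => E (h+1) s' a') := by
            apply Finset.sum_nonneg
            intro s' _
            exact mul_nonneg (hPhnn s a s') (hg0 s')
          have := hCnn h s a
          linarith [min_le_right (((H - h : ℕ) : ℝ) * Rmax) (C h s a + ∑ s' : S, Ph s a s' * Finset.univ.sup' Finset.univ_nonempty (fun a' => E (h+1) s' a'))]
      · exact min_le_left _ _
  intro h hh s a
  set g : S → ℝ := fun s' => Finset.univ.sup' Finset.univ_nonempty (fun a' => E (h+1) s' a') with hgdef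
  have hg0 : ∀ s', 0 ≤ g s' := by
    intro s'
    obtain ⟨a0⟩ := ‹Nonempty A›
    exact le_trans (key (H - (h+1)) (h+1) rfl s' a0).1 (Finset.le_sup' _ (Finset.mem_univ a0))
  have hgU : ∀ s', g s' ≤ ((H - (h+1) : ℕ) : ℝ) * Rmax := by
    intro s'
    apply Finset.sup'_le
    intro a' _
    exact (key (H - (h+1)) (h+1) rfl s' a').2
  have hgood := hGood h hh s a g hg0 hgU
  have hsplit : ∑ s' : S, Ph s a s' * g s'
      = (∑ s' : S, (Ph s a s' - P s a s') * g s') + ∑ s' : S, P s a s' * g s' := by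
    rw [← Finset.sum_add_distrib]
    apply Finset.sum_congr rfl
    intro s' _
    ring
  have habs : ∑ s' : S, (Ph s a s' - P s a s') * g s' ≤ C h s a :=
    le_trans (le_abs_self _) hgood
  have hmin : E h s a ≤ C h s a + ∑ s' : S, Ph s a s' * g s' := by
    rw [hE h hh s a]
    exact min_le_right _ _
  calc E h s a ≤ C h s a + ∑ s' : S, Ph s a s' * g s' := hmin
    _ = C h s a + ((∑ s' : S, (Ph s a s' - P s a s') * g s') + ∑ s' : S, P s a s' * g s') := by rw [hsplit]
    _ ≤ 2 * C h s a + ∑ s' : S, P s a s' * g s' := by linarith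
end

section
/- Let ε > 0, and suppose that for all s, a, h the reward estimation error satisfies |r_h(s,a) − r̂_h(s,a)| ≤ C_h(s,a) with H·max_{s,a,h} C_h(s,a) ≤ ε/2, where r is any feasible reward for the true IRL problem and r̂ any feasible reward for the estimated problem. Let π* be optimal for M∪r in the true MDP and π̂* optimal for the recovered reward. Then for all s, a, h: |Q^{π*}_{M∪r,h}(s,a) − Q^{π̂*}_{M∪r,h}(s,a)| ≤ 2H·max_{s,a,h} C_h(s,a) ≤ ε. -/
open Finset

lemma stmt13_aux {S A : Type*} [Fintype S] [Fintype A]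
    (H h : ℕ) (hh : h ≤ H) (Cmax : ℝ) (hC : 0 ≤ Cmax)
    (ρ1 ρ2 : ℕ → S → A → ℝ) (d : ℕ → S → A → ℝ)
    (h1nn : ∀ h' s a, 0 ≤ ρ1 h' s a)
    (h1sum : ∀ h', h ≤ h' → h' ≤ H → ∑ s : S, ∑ a : A, ρ1 h' s a = 1)
    (h2nn : ∀ h' s a, 0 ≤ ρ2 h' s a)
    (h2sum : ∀ h', h ≤ h' → h' ≤ H → ∑ s : S, ∑ a : A, ρ2 h' s a = 1)
    (h0 : ∀ s a, ρ1 h s a = ρ2 h s a)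
    (hd : ∀ h' s a, |d h' s a| ≤ Cmax) :
    ∑ h' ∈ Finset.Icc h H, ∑ s : S, ∑ a : A, (ρ1 h' s a - ρ2 h' s a) * d h' s a
      ≤ 2 * (H : ℝ) * Cmax := by
  rw [Finset.Icc_eq_cons_Ioc hh, Finset.sum_cons]
  have hz : ∑ s : S, ∑ a : A, (ρ1 h s a - ρ2 h s a) * d h s a = 0 := by
    apply Finset.sum_eq_zero; intro s _
    apply Finset.sum_eq_zero; intro a _
    rw [h0]; ring
  rw [hz, zero_add]
  have key : ∀ h' ∈ Finset.Ioc h H,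
      ∑ s : S, ∑ a : A, (ρ1 h' s a - ρ2 h' s a) * d h' s a ≤ 2 * Cmax := by
    intro h' hmem
    rw [Finset.mem_Ioc] at hmem
    calc ∑ s : S, ∑ a : A, (ρ1 h' s a - ρ2 h' s a) * d h' s a
        ≤ ∑ s : S, ∑ a : A, (ρ1 h' s a + ρ2 h' s a) * Cmax := by
          apply Finset.sum_le_sum; intro s _
          apply Finset.sum_le_sum; intro a _
          calc (ρ1 h' s a - ρ2 h' s a) * d h' s a
              ≤ |(ρ1 h' s a - ρ2 h' s a) * d h' s a| := le_abs_self _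
            _ = |ρ1 h' s a - ρ2 h' s a| * |d h' s a| := abs_mul _ _
            _ ≤ (ρ1 h' s a + ρ2 h' s a) * Cmax := by
                apply mul_le_mul _ (hd _ _ _) (abs_nonneg _)
                · exact add_nonneg (h1nn _ _ _) (h2nn _ _ _)
                · calc |ρ1 h' s a - ρ2 h' s a| ≤ |ρ1 h' s a| + |ρ2 h' s a| :=
                        abs_sub _ _
                    _ = ρ1 h' s a + ρ2 h' s a := by
                        rw [abs_of_nonneg (h1nn _ _ _), abs_of_nonneg (h2nn _ _ _)]
      _ = 2 * Cmax := by
          simp only [add_mul, Finset.sum_add_distrib, ← Finset.sum_mul]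
          rw [h1sum h' hmem.1.le hmem.2, h2sum h' hmem.1.le hmem.2]; ring
  calc ∑ h' ∈ Finset.Ioc h H, ∑ s : S, ∑ a : A, (ρ1 h' s a - ρ2 h' s a) * d h' s a
      ≤ ∑ h' ∈ Finset.Ioc h H, 2 * Cmax := Finset.sum_le_sum key
    _ = (Finset.Ioc h H).card * (2 * Cmax) := by rw [Finset.sum_const, nsmul_eq_mul]
    _ ≤ H * (2 * Cmax) := by
        apply mul_le_mul_of_nonneg_right _ (by positivity)
        rw [Nat.card_Ioc]; exact_mod_cast Nat.sub_le H h
    _ = 2 * (H:ℝ) * Cmax := by ring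

/-- cf. Corollary B.5 of the paper. If the reward estimation error
satisfies `|r − r̂| ≤ C` with `H·max C ≤ ε/2`, then the optimal policy `π̂*` of the
recovered reward is `ε`-close in Q-value to the optimal policy `π*` of the true reward:
`|Q^{π*}_{M∪r,h}(s,a) − Q^{π̂*}_{M∪r,h}(s,a)| ≤ 2H·max C ≤ ε`. -/
theorem stmt13 {S A : Type*} [Fintype S] [Fintype A] [DecidableEq S] [DecidableEq A]
    (H : ℕ) (ε Cmax : ℝ) (hε : 0 < ε)
    (r rh : ℕ → S → A → ℝ)
    (C : ℕ → S → A → ℝ)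
    (hrC : ∀ h s a, |r h s a - rh h s a| ≤ C h s a)
    (hCmax : ∀ h s a, C h s a ≤ Cmax)
    (hstop : (H : ℝ) * Cmax ≤ ε / 2)
    -- `Qs = Q^{π*}_{M∪r}` and `Qh = Q^{π̂*}_{M∪r}`
    (Qs Qh : ℕ → S → A → ℝ)
    -- occupancy measures of `π*` and `π̂*`; they are probability distributions
    (ρs ρh : ℕ → ℕ → S → A → S → A → ℝ)
    (hρsnn : ∀ h h' s a s' a', 0 ≤ ρs h h' s a s' a')
    (hρssum : ∀ h h' s a, h ≤ h' → h' ≤ H → ∑ s' : S, ∑ a' : A, ρs h h' s a s' a' = 1)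
    (hρs0 : ∀ h s a s' a', ρs h h s a s' a' = if s' = s ∧ a' = a then 1 else 0)
    (hρhnn : ∀ h h' s a s' a', 0 ≤ ρh h h' s a s' a')
    (hρhsum : ∀ h h' s a, h ≤ h' → h' ≤ H → ∑ s' : S, ∑ a' : A, ρh h h' s a s' a' = 1)
    (hρh0 : ∀ h s a s' a', ρh h h s a s' a' = if s' = s ∧ a' = a then 1 else 0)
    -- the simulation lemma, in both directions
    (hsim1 : ∀ h, h ≤ H → ∀ s a,
      Qs h s a - Qh h s a ≤
        ∑ h' ∈ Finset.Icc h H, ∑ s' : S, ∑ a' : A,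
          (ρs h h' s a s' a' - ρh h h' s a s' a') * (r h' s' a' - rh h' s' a'))
    (hsim2 : ∀ h, h ≤ H → ∀ s a,
      Qh h s a - Qs h s a ≤
        ∑ h' ∈ Finset.Icc h H, ∑ s' : S, ∑ a' : A,
          (ρh h h' s a s' a' - ρs h h' s a s' a') * (rh h' s' a' - r h' s' a')) :
    (∀ h, h ≤ H → ∀ s a, |Qs h s a - Qh h s a| ≤ 2 * (H : ℝ) * Cmax) ∧
      2 * (H : ℝ) * Cmax ≤ ε := by
  constructor
  · intro h hh s a
    have hC : (0:ℝ) ≤ Cmax :=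
      le_trans (le_trans (abs_nonneg _) (hrC 0 s a)) (hCmax 0 s a)
    rw [abs_sub_le_iff]
    constructor
    · refine le_trans (hsim1 h hh s a) ?_
      exact stmt13_aux H h hh Cmax hC (fun h' s' a' => ρs h h' s a s' a')
        (fun h' s' a' => ρh h h' s a s' a') (fun h' s' a' => r h' s' a' - rh h' s' a')
        (fun h' s' a' => hρsnn h h' s a s' a') (fun h' h1 h2 => hρssum h h' s a h1 h2)
        (fun h' s' a' => hρhnn h h' s a s' a') (fun h' h1 h2 => hρhsum h h' s a h1 h2)
        (fun s' a' => by simp only [hρs0, hρh0])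
        (fun h' s' a' => le_trans (hrC h' s' a') (hCmax h' s' a'))
    · refine le_trans (hsim2 h hh s a) ?_
      exact stmt13_aux H h hh Cmax hC (fun h' s' a' => ρh h h' s a s' a')
        (fun h' s' a' => ρs h h' s a s' a') (fun h' s' a' => rh h' s' a' - r h' s' a')
        (fun h' s' a' => hρhnn h h' s a s' a') (fun h' h1 h2 => hρhsum h h' s a h1 h2)
        (fun h' s' a' => hρsnn h h' s a s' a') (fun h' h1 h2 => hρssum h h' s a h1 h2)
        (fun s' a' => by simp only [hρs0, hρh0])
        (fun h' s' a' => by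
          rw [abs_sub_comm]; exact le_trans (hrC h' s' a') (hCmax h' s' a'))
  · linarith
end
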